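/- For a p-adic integer q with |q|_p < 1 and infinitely many nonzero digits, the quotient group Γ_q/ℤ is isomorphic to the Prüfer p-group ℤ(p^∞). -/

import Mathlib

open AddSubgroup


/-- for `q ∈ ℤ_p` with `|q|_p < 1` and infinitely many nonzero
digits (equivalently, `q` is not of the form `m / p^k` with `m ∈ ℤ`), the
quotient `Γ_q/ℤ` (realized as the image of `Γ_q` in `ℚ/ℤ`) is isomorphic to the
Prüfer p-group `ℤ(p^∞)`, the p-primary torsion subgroup of `ℚ/ℤ`. -/
theorem gamma_mod_int_iso_prufer (p : ℕ) [Fact p.Prime] (q : ℤ_[p]) (hq : ‖q‖ < 1)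
    (hirr : ∀ (k : ℕ) (m : ℤ), (p : ℤ_[p]) ^ k * q ≠ (m : ℤ_[p]))
    (a : ℕ → ℤ)
    (hbound : ∀ n, 1 ≤ n → 0 ≤ a n ∧ a n ≤ (p : ℤ) ^ n - 1)
    (happrox : ∀ n, 1 ≤ n → ‖q - (a n : ℤ_[p])‖ ≤ (p : ℝ) ^ (-(n : ℤ))) :
    Nonempty
      (((AddSubgroup.closure {x : ℚ | ∃ n, 1 ≤ n ∧ x = (a n : ℚ) / (p : ℚ) ^ n}).map
          (QuotientAddGroup.mk' (AddSubgroup.zmultiples (1 : ℚ)))) ≃+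
        AddCommGroup.primaryComponent (AddCircle (1 : ℚ)) p) := by
  have hp : p.Prime := Fact.out
  have hp1 : (1:ℝ) < p := by exact_mod_cast hp.one_lt
  have hp0Q : (p:ℚ) ≠ 0 := by exact_mod_cast hp.ne_zero
  set f := QuotientAddGroup.mk' (AddSubgroup.zmultiples (1 : ℚ)) with hf
  set S := {x : ℚ | ∃ n, 1 ≤ n ∧ x = (a n : ℚ) / (p : ℚ) ^ n} with hS
  have hq0 : q ≠ 0 := by
    intro h
    exact hirr 0 0 (by simp [h])
  set v : ℕ := q.valuation with hv
  have hvz : (v : ℤ) = q.valuation := rfl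
  have hnormq : ‖q‖ = (p:ℝ) ^ (-(v:ℤ)) := by
    rw [PadicInt.norm_eq_zpow_neg_valuation hq0]
  -- f maps integers to 0
  have hfint : ∀ c : ℤ, f (c : ℚ) = 0 := by
    intro c
    rw [hf, QuotientAddGroup.mk'_apply, QuotientAddGroup.eq_zero_iff]
    exact intCast_mem_zmultiples_one c
  -- key : 1/p^m lands in the image
  have key : ∀ m : ℕ, f ((1:ℚ) / (p:ℚ) ^ m) ∈
      (AddSubgroup.closure S).map f := by
    intro m
    rcases m with _ | m
    · have h0 : f ((1:ℚ)) = 0 := by simpa using hfint 1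
      simp only [pow_zero, div_one, h0]
      exact zero_mem _
    · set n : ℕ := m + 1 + v with hn
      have hn1 : 1 ≤ n := by omega
      have h1 : ‖q - (a n : ℤ_[p])‖ ≤ (p:ℝ) ^ (-(n:ℤ)) := happrox n hn1
      have hle : (p:ℝ) ^ (-(n:ℤ)) ≤ (p:ℝ) ^ (-(v:ℤ)) :=
        zpow_le_zpow_right₀ hp1.le (by omega)
      -- p^v ∣ a n
      have hdvd : ((p:ℤ) ^ v) ∣ a n := by
        rw [← PadicInt.norm_int_le_pow_iff_dvd]
        calc ‖((a n : ℤ) : ℤ_[p])‖ = ‖q + (((a n : ℤ) : ℤ_[p]) - q)‖ := by ring_nf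
          _ ≤ max ‖q‖ ‖((a n : ℤ) : ℤ_[p]) - q‖ := PadicInt.nonarchimedean _ _
          _ = max ‖q‖ ‖q - ((a n : ℤ) : ℤ_[p])‖ := by rw [norm_sub_rev]
          _ ≤ (p:ℝ) ^ (-(v:ℤ)) := max_le (le_of_eq hnormq) (h1.trans hle)
      -- ¬ p^(v+1) ∣ a n
      have hndvd : ¬ ((p:ℤ) ^ (v+1)) ∣ a n := by
        intro hdv
        have h2 : ‖((a n : ℤ) : ℤ_[p])‖ ≤ (p:ℝ) ^ (-((v:ℤ)+1)) := by
          have := PadicInt.norm_int_le_pow_iff_dvd (p := p) (k := a n) (n := v+1) |>.mpr hdv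
          simpa [Nat.cast_add] using this
        have h3 : ‖q‖ ≤ (p:ℝ) ^ (-((v:ℤ)+1)) := by
          calc ‖q‖ = ‖(q - (a n : ℤ_[p])) + (a n : ℤ_[p])‖ := by ring_nf
            _ ≤ max ‖q - (a n : ℤ_[p])‖ ‖((a n : ℤ) : ℤ_[p])‖ :=
                PadicInt.nonarchimedean _ _
            _ ≤ (p:ℝ) ^ (-((v:ℤ)+1)) := by
                refine max_le (h1.trans ?_) h2
                exact zpow_le_zpow_right₀ hp1.le (by omega)
        rw [hnormq] at h3
        exact absurd h3 (not_le.mpr (zpow_lt_zpow_right₀ hp1 (by omega)))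
      obtain ⟨b, hb⟩ := hdvd
      have hpb : ¬ (p:ℤ) ∣ b := by
        intro ⟨c, hc⟩
        exact hndvd ⟨c, by rw [hb, hc]; ring⟩
      have hcop : IsCoprime ((p:ℤ) ^ (m+1)) b :=
        (((Nat.prime_iff_prime_int.mp hp).coprime_iff_not_dvd).mpr hpb).pow_left
      obtain ⟨s, t, hst⟩ := hcop
      have hγ : ((a n : ℚ)) / (p:ℚ) ^ n ∈ S := ⟨n, hn1, rfl⟩
      have hfγ : f ((a n : ℚ) / (p:ℚ) ^ n) ∈ (AddSubgroup.closure S).map f :=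
        AddSubgroup.mem_map_of_mem f (AddSubgroup.subset_closure hγ)
      have hmem : t • f ((a n : ℚ) / (p:ℚ) ^ n) ∈ (AddSubgroup.closure S).map f :=
        zsmul_mem hfγ t
      have hbQ : (a n : ℚ) = (p:ℚ) ^ v * (b : ℚ) := by exact_mod_cast hb
      have hstQ : (s:ℚ) * (p:ℚ)^(m+1) + (t:ℚ) * (b:ℚ) = 1 := by exact_mod_cast hst
      have hrat : t • ((a n : ℚ) / (p:ℚ) ^ n) - (1:ℚ) / (p:ℚ) ^ (m+1) = ((-s : ℤ) : ℚ) := by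
        have hpn : (p:ℚ) ^ n = (p:ℚ)^(m+1) * (p:ℚ)^v := by
          rw [hn]; ring
        rw [zsmul_eq_mul, hbQ, hpn]
        have h1 : (p:ℚ)^(m+1) ≠ 0 := pow_ne_zero _ hp0Q
        have h2 : (p:ℚ)^v ≠ 0 := pow_ne_zero _ hp0Q
        field_simp
        push_cast
        linear_combination hstQ
      have heq : t • f ((a n : ℚ) / (p:ℚ) ^ n) = f ((1:ℚ) / (p:ℚ) ^ (m+1)) := by
        rw [← map_zsmul]
        rw [hf, QuotientAddGroup.mk'_apply, QuotientAddGroup.mk'_apply,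
          QuotientAddGroup.eq_iff_sub_mem, hrat]
        exact intCast_mem_zmultiples_one _
      exact heq ▸ hmem
  -- the two subgroups are equal
  have hEq : ((AddSubgroup.closure S).map f) =
      AddCommGroup.primaryComponent (AddCircle (1 : ℚ)) p := by
    apply le_antisymm
    · rw [AddMonoidHom.map_closure]
      apply AddSubgroup.closure_le _ |>.mpr
      rintro x ⟨y, ⟨n, hn1, rfl⟩, rfl⟩
      have hord : addOrderOf (f ((a n : ℚ) / (p:ℚ)^n)) ∣ p ^ n := by
        rw [addOrderOf_dvd_iff_nsmul_eq_zero, ← map_nsmul]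
        rw [show (p ^ n) • ((a n : ℚ) / (p:ℚ)^n) = ((a n : ℚ)) by
          rw [nsmul_eq_mul]; push_cast; field_simp]
        exact hfint (a n)
      obtain ⟨i, _, hi⟩ := (Nat.dvd_prime_pow hp).mp hord
      exact ⟨i, by rw [← hi]; exact addOrderOf_nsmul_eq_zero _⟩
    · intro x hx
      obtain ⟨m, hm⟩ := hx
      obtain ⟨r, rfl⟩ := QuotientAddGroup.mk'_surjective (AddSubgroup.zmultiples (1:ℚ)) x
      have hsm : p ^ m • f r = 0 := by
        rw [← hm]
      rw [← map_nsmul, hf, QuotientAddGroup.mk'_apply, QuotientAddGroup.eq_zero_iff,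
        AddSubgroup.mem_zmultiples_iff] at hsm
      obtain ⟨c, hc⟩ := hsm
      have hcQ : (c:ℚ) = (p:ℚ)^m * r := by
        rw [zsmul_eq_mul, mul_one, nsmul_eq_mul] at hc
        push_cast at hc
        linarith [hc]
      have hr : (c:ℤ) • ((1:ℚ)/(p:ℚ)^m) = r := by
        rw [zsmul_eq_mul, hcQ]
        field_simp
      rw [show f r = (c:ℤ) • f ((1:ℚ)/(p:ℚ)^m) by rw [← map_zsmul, hr]]
      exact zsmul_mem (key m) c
  exact ⟨AddEquiv.addSubgroupCongr hEq⟩
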